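/- For every ρ with 0 < ρ < 1, the Legendre generating-function kernel K_ρ(x,y) = 1/(4π√(1 − 2(x·y)ρ + ρ²)) is positive definite on the sphere: for every finite collection of points x₁,…,xₙ ∈ S² and all complex numbers c₁,…,cₙ, the sum ∑_{i=1}^{n} ∑_{j=1}^{n} c_i · conj(c_j) · K_ρ(x_i, x_j) is a nonnegative real number. -/

import Mathlib

open MeasureTheory Metric Finset
open scoped ComplexOrder

/-- The dot product of two points of the unit sphere `S² ⊂ ℝ³`. -/
noncomputable def sphereDot (x y : sphere (0 : EuclideanSpace ℝ (Fin 3)) 1) : ℝ :=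
  inner ℝ (x : EuclideanSpace ℝ (Fin 3)) (y : EuclideanSpace ℝ (Fin 3))

/-- The Legendre generating-function kernel with parameter `ρ`:
`K_ρ(x,y) = 1/(4π√(1 - 2(x·y)ρ + ρ²))`. -/
noncomputable def genKernel (ρ : ℝ) (x y : sphere (0 : EuclideanSpace ℝ (Fin 3)) 1) : ℝ :=
  1 / (4 * Real.pi * Real.sqrt (1 - 2 * sphereDot x y * ρ + ρ ^ 2))

private lemma sphereDot_symm (x y : sphere (0 : EuclideanSpace ℝ (Fin 3)) 1) :
    sphereDot x y = sphereDot y x := real_inner_comm _ _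

private lemma sphereDot_le_one (x y : sphere (0 : EuclideanSpace ℝ (Fin 3)) 1) :
    sphereDot x y ≤ 1 := by
  have h := abs_real_inner_le_norm (x : EuclideanSpace ℝ (Fin 3)) (y : EuclideanSpace ℝ (Fin 3))
  rw [norm_eq_of_mem_sphere, norm_eq_of_mem_sphere, mul_one] at h
  exact (abs_le.mp h).2

private lemma sphereDot_eq (x y : sphere (0 : EuclideanSpace ℝ (Fin 3)) 1) :
    sphereDot x y = ∑ m, (x : EuclideanSpace ℝ (Fin 3)) m * (y : EuclideanSpace ℝ (Fin 3)) m := by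
  simp [sphereDot, PiLp.inner_apply, RCLike.inner_apply]
  exact Finset.sum_congr rfl fun _ _ => mul_comm _ _

/-- Positivity of each moment `∑ᵢⱼ vᵢ vⱼ (xᵢ·xⱼ)ᵏ`. -/
private lemma moment_nonneg (n k : ℕ) (x : Fin n → sphere (0 : EuclideanSpace ℝ (Fin 3)) 1)
    (v : Fin n → ℝ) : 0 ≤ ∑ i, ∑ j, v i * v j * sphereDot (x i) (x j) ^ k := by
  set A : Fin n → (Fin k → Fin 3) → ℝ :=
    fun i p => ∏ l, (x i : EuclideanSpace ℝ (Fin 3)) (p l) with hA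
  have h1 : ∀ i j, v i * v j * sphereDot (x i) (x j) ^ k
      = ∑ p : Fin k → Fin 3, (v i * A i p) * (v j * A j p) := by
    intro i j
    rw [sphereDot_eq, Fintype.sum_pow, Finset.mul_sum]
    refine Finset.sum_congr rfl fun p _ => ?_
    rw [hA]
    simp only []
    rw [Finset.prod_mul_distrib]
    ring
  calc ∑ i, ∑ j, v i * v j * sphereDot (x i) (x j) ^ k
      = ∑ i, ∑ j, ∑ p : Fin k → Fin 3, (v i * A i p) * (v j * A j p) := by
        exact Finset.sum_congr rfl fun i _ => Finset.sum_congr rfl fun j _ => h1 i j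
    _ = ∑ i, ∑ p : Fin k → Fin 3, ∑ j, (v i * A i p) * (v j * A j p) := by
        exact Finset.sum_congr rfl fun i _ => Finset.sum_comm
    _ = ∑ p : Fin k → Fin 3, ∑ i, ∑ j, (v i * A i p) * (v j * A j p) := Finset.sum_comm
    _ = ∑ p : Fin k → Fin 3, (∑ i, v i * A i p) * (∑ j, v j * A j p) := by
        exact Finset.sum_congr rfl fun p _ => (Finset.sum_mul_sum _ _ _ _).symm
    _ ≥ 0 := Finset.sum_nonneg fun p _ => mul_self_nonneg _

/-- Positive definiteness of the kernel `exp(λ x·y)` for `λ ≥ 0`. -/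
private lemma exp_pd (n : ℕ) (x : Fin n → sphere (0 : EuclideanSpace ℝ (Fin 3)) 1)
    (v : Fin n → ℝ) {lam : ℝ} (hlam : 0 ≤ lam) :
    0 ≤ ∑ i, ∑ j, v i * v j * Real.exp (lam * sphereDot (x i) (x j)) := by
  have hexp : ∀ i j : Fin n,
      HasSum (fun k : ℕ => v i * v j * ((lam * sphereDot (x i) (x j)) ^ k / k.factorial))
        (v i * v j * Real.exp (lam * sphereDot (x i) (x j))) := by
    intro i j
    refine HasSum.mul_left _ ?_
    rw [Real.exp_eq_exp_ℝ]
    exact NormedSpace.expSeries_div_hasSum_exp _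
  have hsum : HasSum
      (fun k : ℕ => ∑ i, ∑ j, v i * v j * ((lam * sphereDot (x i) (x j)) ^ k / k.factorial))
      (∑ i, ∑ j, v i * v j * Real.exp (lam * sphereDot (x i) (x j))) :=
    hasSum_sum fun i _ => hasSum_sum fun j _ => hexp i j
  refine hasSum_le (fun k => ?_) hasSum_zero hsum
  have heq : ∑ i, ∑ j, v i * v j * ((lam * sphereDot (x i) (x j)) ^ k / k.factorial)
      = (lam ^ k / k.factorial) * ∑ i, ∑ j, v i * v j * sphereDot (x i) (x j) ^ k := by
    rw [Finset.mul_sum]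
    refine Finset.sum_congr rfl fun i _ => ?_
    rw [Finset.mul_sum]
    refine Finset.sum_congr rfl fun j _ => ?_
    rw [mul_pow]
    ring
  rw [heq]
  exact mul_nonneg (by positivity) (moment_nonneg n k x v)

private lemma s_pos {ρ : ℝ} (hρ₀ : 0 < ρ) (hρ₁ : ρ < 1)
    (x y : sphere (0 : EuclideanSpace ℝ (Fin 3)) 1) :
    0 < 1 - 2 * sphereDot x y * ρ + ρ ^ 2 := by
  nlinarith [sphereDot_le_one x y, sq_nonneg (1 - ρ)]

/-- Integral representation of the kernel. -/
private lemma kernel_eq {ρ : ℝ} (hρ₀ : 0 < ρ) (hρ₁ : ρ < 1)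
    (x y : sphere (0 : EuclideanSpace ℝ (Fin 3)) 1) :
    genKernel ρ x y = ∫ u in Set.Ioi (0 : ℝ),
      (1 / (4 * Real.pi * Real.sqrt Real.pi)) *
        (u ^ (-(1 / 2) : ℝ) * Real.exp (-((1 - 2 * sphereDot x y * ρ + ρ ^ 2) * u))) := by
  set s : ℝ := 1 - 2 * sphereDot x y * ρ + ρ ^ 2 with hs_def
  have hs : 0 < s := s_pos hρ₀ hρ₁ x y
  rw [MeasureTheory.integral_const_mul]
  have h := Real.integral_rpow_mul_exp_neg_mul_Ioi (a := 1 / 2) (r := s) one_half_pos hs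
  have h12 : (1 / 2 : ℝ) - 1 = -(1 / 2) := by norm_num
  rw [h12] at h
  rw [h, Real.Gamma_one_half_eq, ← Real.sqrt_eq_rpow, one_div s, Real.sqrt_inv]
  have hπ : 0 < Real.pi := Real.pi_pos
  have hsπ : 0 < Real.sqrt Real.pi := Real.sqrt_pos.mpr hπ
  have hss : 0 < Real.sqrt s := Real.sqrt_pos.mpr hs
  rw [genKernel]
  rw [← hs_def]
  field_simp

/-- Real positive definiteness of the generating kernel. -/
private lemma real_pd {ρ : ℝ} (hρ₀ : 0 < ρ) (hρ₁ : ρ < 1) (n : ℕ)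
    (x : Fin n → sphere (0 : EuclideanSpace ℝ (Fin 3)) 1) (v : Fin n → ℝ) :
    0 ≤ ∑ i, ∑ j, v i * v j * genKernel ρ (x i) (x j) := by
  set C : ℝ := 1 / (4 * Real.pi * Real.sqrt Real.pi) with hC
  set s : Fin n → Fin n → ℝ :=
    fun i j => 1 - 2 * sphereDot (x i) (x j) * ρ + ρ ^ 2 with hs_def
  have hs : ∀ i j, 0 < s i j := fun i j => s_pos hρ₀ hρ₁ (x i) (x j)
  set g : Fin n × Fin n → ℝ → ℝ :=
    fun p u => v p.1 * v p.2 * (C * (u ^ (-(1 / 2) : ℝ) * Real.exp (-(s p.1 p.2 * u)))) with hg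
  have hint : ∀ p : Fin n × Fin n, IntegrableOn (g p) (Set.Ioi (0 : ℝ)) := by
    intro p
    have h0 : IntegrableOn (fun u : ℝ => u ^ (-(1 / 2) : ℝ) *
        Real.exp (-(s p.1 p.2) * u ^ (1 : ℝ))) (Set.Ioi 0) :=
      integrableOn_rpow_mul_exp_neg_mul_rpow (by norm_num) zero_lt_one (hs p.1 p.2)
    have h1 : IntegrableOn (fun u : ℝ => u ^ (-(1 / 2) : ℝ) *
        Real.exp (-(s p.1 p.2 * u))) (Set.Ioi 0) := by
      refine h0.congr_fun (fun u _ => ?_) measurableSet_Ioi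
      beta_reduce
      rw [Real.rpow_one, neg_mul]
    simpa [IntegrableOn, hg, mul_assoc, mul_comm, mul_left_comm] using
      (h1.const_mul (v p.1 * v p.2 * C))
  have hK : ∀ i j, v i * v j * genKernel ρ (x i) (x j)
      = ∫ u in Set.Ioi (0 : ℝ), g (i, j) u := by
    intro i j
    rw [kernel_eq hρ₀ hρ₁ (x i) (x j)]
    rw [← MeasureTheory.integral_const_mul]
  calc (0 : ℝ)
      ≤ ∫ u in Set.Ioi (0 : ℝ), ∑ p : Fin n × Fin n, g p u := by
        refine setIntegral_nonneg measurableSet_Ioi fun u hu => ?_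
        have hu' : (0 : ℝ) < u := hu
        have key : ∀ p : Fin n × Fin n, g p u
            = (C * u ^ (-(1 / 2) : ℝ) * Real.exp (-((1 + ρ ^ 2) * u))) *
              (v p.1 * v p.2 * Real.exp ((2 * ρ * u) * sphereDot (x p.1) (x p.2))) := by
          intro p
          rw [hg]
          simp only []
          rw [show -(s p.1 p.2 * u) = -((1 + ρ ^ 2) * u)
              + 2 * ρ * u * sphereDot (x p.1) (x p.2) by rw [hs_def]; ring,
            Real.exp_add]
          ring
        simp_rw [key, ← Finset.mul_sum]
        refine mul_nonneg ?_ ?_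
        · have : 0 ≤ C := by
            rw [hC]; positivity
          positivity
        · rw [Fintype.sum_prod_type]
          exact exp_pd n x v (by positivity)
    _ = ∑ p : Fin n × Fin n, ∫ u in Set.Ioi (0 : ℝ), g p u :=
        integral_finset_sum _ fun p _ => hint p
    _ = ∑ i, ∑ j, v i * v j * genKernel ρ (x i) (x j) := by
        rw [Fintype.sum_prod_type]
        exact Finset.sum_congr rfl fun i _ => Finset.sum_congr rfl fun j _ => (hK i j).symm

/-- For every `0 < ρ < 1` the Legendre generating-function kernel is positive definite on
the sphere: for points `x₁, …, xₙ ∈ S²` and complex numbers `c₁, …, cₙ`, the sum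
`∑ᵢ ∑ⱼ cᵢ conj(cⱼ) K_ρ(xᵢ, xⱼ)` is a nonnegative real number. -/
theorem gen_kernel_positive_definite (ρ : ℝ) (hρ₀ : 0 < ρ) (hρ₁ : ρ < 1) (n : ℕ)
    (x : Fin n → sphere (0 : EuclideanSpace ℝ (Fin 3)) 1) (c : Fin n → ℂ) :
    0 ≤ ∑ i, ∑ j, c i * (starRingEnd ℂ) (c j) *
      ((genKernel ρ (x i) (x j) : ℝ) : ℂ) := by
  set K : Fin n → Fin n → ℝ := fun i j => genKernel ρ (x i) (x j) with hKdef
  have hKsymm : ∀ i j, K i j = K j i := by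
    intro i j
    simp only [hKdef, genKernel, sphereDot_symm (x i) (x j)]
  set a : Fin n → ℝ := fun i => (c i).re with ha
  set b : Fin n → ℝ := fun i => (c i).im with hb
  rw [Complex.le_def]
  constructor
  · rw [Complex.re_sum]
    have hre : ∀ i, (∑ j, c i * (starRingEnd ℂ) (c j) * ((K i j : ℝ) : ℂ)).re
        = ∑ j, (a i * a j + b i * b j) * K i j := by
      intro i
      rw [Complex.re_sum]
      refine Finset.sum_congr rfl fun j _ => ?_
      simp [Complex.mul_re, Complex.mul_im, ha, hb]
      all_goals ring
    rw [Finset.sum_congr rfl fun i _ => hre i]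
    simp only [Complex.zero_re]
    have : ∑ i, ∑ j, (a i * a j + b i * b j) * K i j
        = (∑ i, ∑ j, a i * a j * K i j) + ∑ i, ∑ j, b i * b j * K i j := by
      rw [← Finset.sum_add_distrib]
      refine Finset.sum_congr rfl fun i _ => ?_
      rw [← Finset.sum_add_distrib]
      refine Finset.sum_congr rfl fun j _ => ?_
      ring
    rw [this]
    exact add_nonneg (real_pd hρ₀ hρ₁ n x a) (real_pd hρ₀ hρ₁ n x b)
  · rw [Complex.im_sum]
    have him : ∀ i, (∑ j, c i * (starRingEnd ℂ) (c j) * ((K i j : ℝ) : ℂ)).im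
        = ∑ j, (b i * a j * K i j - a i * b j * K i j) := by
      intro i
      rw [Complex.im_sum]
      refine Finset.sum_congr rfl fun j _ => ?_
      simp [Complex.mul_re, Complex.mul_im, ha, hb]
      all_goals ring
    rw [Finset.sum_congr rfl fun i _ => him i]
    simp only [Complex.zero_im]
    rw [eq_comm]
    simp_rw [Finset.sum_sub_distrib]
    rw [sub_eq_zero]
    rw [Finset.sum_comm]
    refine Finset.sum_congr rfl fun i _ => Finset.sum_congr rfl fun j _ => ?_
    rw [hKsymm j i]
    ring
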